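/- There do not exist finitely many complex numbers μ_1, …, μ_r (r ≥ 0) such that μ_1^N + μ_2^N + ⋯ + μ_r^N = -1 for all positive integers N. -/

import Mathlib

lemma aux_power_indep (s : Finset ℂ) :
    ∀ c : ℂ → ℂ, (∀ N : ℕ, 0 < N → ∑ z ∈ s, c z * z ^ N = 0) →
    ∀ z ∈ s, z ≠ 0 → c z = 0 := by
  induction s using Finset.strongInduction with
  | _ s ih =>
    intro c h z hz hz0
    by_cases hcard : s.card ≤ 1
    · have hs : s = {z} := by
        apply Finset.eq_singleton_iff_unique_mem.mpr
        exact ⟨hz, fun y hy => Finset.card_le_one.mp hcard y hy z hz⟩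
      have := h 1 one_pos
      rw [hs, Finset.sum_singleton, pow_one] at this
      rcases mul_eq_zero.mp this with hc | hc
      · exact hc
      · exact absurd hc hz0
    · push_neg at hcard
      obtain ⟨lam, hlam, hne⟩ := Finset.exists_mem_ne hcard z
      have hsub : s.erase lam ⊂ s := Finset.erase_ssubset hlam
      have hkey : ∀ N : ℕ, 0 < N →
          ∑ w ∈ s.erase lam, (c w * (w - lam)) * w ^ N = 0 := by
        intro N hN
        have he : ∑ w ∈ s.erase lam, (c w * (w - lam)) * w ^ N
            = ∑ w ∈ s, (c w * (w - lam)) * w ^ N := by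
          rw [← Finset.add_sum_erase s _ hlam]
          simp
        rw [he]
        have : ∀ w ∈ s, (c w * (w - lam)) * w ^ N
            = c w * w ^ (N + 1) - lam * (c w * w ^ N) := by
          intro w _; ring
        rw [Finset.sum_congr rfl this, Finset.sum_sub_distrib,
          h (N + 1) (Nat.succ_pos N), ← Finset.mul_sum, h N hN]
        ring
      have hz' : z ∈ s.erase lam := Finset.mem_erase.mpr ⟨Ne.symm hne, hz⟩
      have := ih (s.erase lam) hsub (fun w => c w * (w - lam)) hkey z hz' hz0
      rcases mul_eq_zero.mp this with hc | hc
      · exact hc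
      · exact absurd (sub_eq_zero.mp hc) (Ne.symm hne)

/-- There do not exist finitely many complex numbers `μ_1, …, μ_r` such that
`μ_1^N + ⋯ + μ_r^N = -1` for all positive integers `N`. -/
theorem stmt1 :
    ¬ ∃ (r : ℕ) (μ : Fin r → ℂ), ∀ N : ℕ, 0 < N → (∑ k, μ k ^ N) = -1 := by
  rintro ⟨r, μ, h⟩
  classical
  set img := Finset.univ.image μ with himg
  set s := insert (1 : ℂ) img with hs
  set c : ℂ → ℂ := fun z =>
    ((Finset.univ.filter (fun k => μ k = z)).card : ℂ) +
      (if z = 1 then 1 else 0) with hc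
  have key : ∀ N : ℕ, 0 < N → ∑ z ∈ s, c z * z ^ N = 0 := by
    intro N hN
    have h1 : ∑ z ∈ s, ((Finset.univ.filter (fun k => μ k = z)).card : ℂ) * z ^ N
        = ∑ k, μ k ^ N := by
      rw [show (∑ k, μ k ^ N) = ∑ k, (fun z => z ^ N) (μ k) from rfl,
        Finset.sum_comp (fun z : ℂ => z ^ N) μ]
      rw [← himg]
      rw [Finset.sum_subset (Finset.subset_insert 1 img)]
      · apply Finset.sum_congr rfl
        intro z _
        simp [nsmul_eq_mul]
      · intro z hzs hzimg
        have : (Finset.univ.filter (fun k => μ k = z)) = ∅ := by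
          apply Finset.filter_eq_empty_iff.mpr
          intro k _
          intro hk
          exact hzimg (Finset.mem_image.mpr ⟨k, Finset.mem_univ k, hk⟩)
        simp [this]
    have h2 : ∑ z ∈ s, (if z = 1 then (1 : ℂ) else 0) * z ^ N = 1 := by
      have : ∀ z ∈ s, (if z = 1 then (1 : ℂ) else 0) * z ^ N
          = if z = 1 then z ^ N else 0 := by
        intro z _; split <;> simp
      rw [Finset.sum_congr rfl this, Finset.sum_ite_eq' s 1 (fun z => z ^ N)]
      simp [hs]
    have : ∑ z ∈ s, c z * z ^ N
        = (∑ z ∈ s, ((Finset.univ.filter (fun k => μ k = z)).card : ℂ) * z ^ N)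
          + ∑ z ∈ s, (if z = 1 then (1 : ℂ) else 0) * z ^ N := by
      rw [← Finset.sum_add_distrib]
      apply Finset.sum_congr rfl
      intro z _
      simp only [hc]; ring
    rw [this, h1, h2, h N hN]
    ring
  have h1mem : (1 : ℂ) ∈ s := Finset.mem_insert_self 1 img
  have := aux_power_indep s c key 1 h1mem one_ne_zero
  simp only [hc, if_pos rfl] at this
  exact Nat.cast_add_one_ne_zero _ this
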